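/- Let T be a finite rooted tree in which no vertex has exactly one child and suppose some vertex of T has at least three children. Then there exists a finite rooted tree T', in which no vertex has exactly one child, having the same number of leaves as T, such that g(T') > g(T). -/

import Mathlib

attribute [local instance] Classical.propDecidable

/-- A finite rooted tree, encoded by a parent function together with a depth
function recording the graph distance to the root. -/
structure FiniteRootedTree where
  V : Type
  fintypeV : Fintype V
  root : V
  parent : V → V
  depth : V → ℕ
  depth_root : depth root = 0
  depth_parent : ∀ v, v ≠ root → depth v = depth (parent v) + 1
  root_of_depth_zero : ∀ v, depth v = 0 → v = root

attribute [instance] FiniteRootedTree.fintypeV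

namespace FiniteRootedTree

/-- `u` is a child of `v`. -/
def IsChild (T : FiniteRootedTree) (u v : T.V) : Prop :=
  u ≠ T.root ∧ T.parent u = v

/-- The number of children of `v`. -/
noncomputable def numChildren (T : FiniteRootedTree) (v : T.V) : ℕ :=
  Set.ncard {u : T.V | T.IsChild u v}

/-- A leaf is a vertex with no children. -/
def IsLeaf (T : FiniteRootedTree) (v : T.V) : Prop :=
  ∀ u, ¬ T.IsChild u v

/-- The finset of leaves of `T`. -/
noncomputable def leaves (T : FiniteRootedTree) : Finset T.V :=
  Finset.univ.filter fun v => T.IsLeaf v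

/-- Probability that the random root-to-leaf walk ends at the leaf `l`:
the product of `1 / c(v)` over the vertices `v ≠ l` on the root-to-`l` path
(equivalently, over the strict ancestors `parent^[k+1] l` of `l`). -/
noncomputable def leafProb (T : FiniteRootedTree) (l : T.V) : ℝ :=
  ∏ k ∈ Finset.range (T.depth l), (1 : ℝ) / (T.numChildren (T.parent^[k + 1] l))

/-- The expected length of the random root-to-leaf walk in `T`. -/
noncomputable def g (T : FiniteRootedTree) : ℝ :=
  ∑ l ∈ T.leaves, (T.depth l : ℝ) * T.leafProb l

/-- The number of vertices of the subtree of `T` rooted at `v`, i.e. the number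
of vertices `u` having `v` as an ancestor (including `v` itself). -/
noncomputable def subtreeSize (T : FiniteRootedTree) (v : T.V) : ℕ :=
  Set.ncard {u : T.V | ∃ k : ℕ, T.parent^[k] u = v}

end FiniteRootedTree

namespace FiniteRootedTree

-- ============ new material ============

noncomputable def childrenF (T : FiniteRootedTree) (v : T.V) : Finset T.V :=
  Finset.univ.filter fun u => T.IsChild u v

lemma mem_childrenF {T : FiniteRootedTree} {u v : T.V} :
    u ∈ T.childrenF v ↔ T.IsChild u v := by simp [childrenF]

lemma numChildren_eq_card (T : FiniteRootedTree) (v : T.V) :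
    T.numChildren v = (T.childrenF v).card := by
  rw [numChildren]
  rw [show {u : T.V | T.IsChild u v} = (T.childrenF v : Set T.V) by
    ext u; simp [mem_childrenF]]
  exact Set.ncard_coe_finset _

lemma depth_iterate (T : FiniteRootedTree) (x : T.V) :
    ∀ k, k ≤ T.depth x → T.depth (T.parent^[k] x) = T.depth x - k := by
  intro k
  induction k with
  | zero => simp
  | succ n ih =>
    intro hk
    have hn : n ≤ T.depth x := Nat.le_of_succ_le hk
    have h1 : T.depth (T.parent^[n] x) = T.depth x - n := ih hn
    have hne : T.parent^[n] x ≠ T.root := by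
      intro h
      rw [h, T.depth_root] at h1
      omega
    have := T.depth_parent _ hne
    rw [Function.iterate_succ_apply']
    omega

lemma iterate_depth_eq_root (T : FiniteRootedTree) (x : T.V) :
    T.parent^[T.depth x] x = T.root := by
  apply T.root_of_depth_zero
  simp [T.depth_iterate x (T.depth x) le_rfl]

/-- `v` is an ancestor (weak) of `l`. -/
def Anc (T : FiniteRootedTree) (v l : T.V) : Prop :=
  T.depth v ≤ T.depth l ∧ T.parent^[T.depth l - T.depth v] l = v

lemma anc_refl (T : FiniteRootedTree) (l : T.V) : T.Anc l l := ⟨le_rfl, by simp⟩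

lemma anc_unique {T : FiniteRootedTree} {a b l : T.V} (ha : T.Anc a l) (hb : T.Anc b l)
    (h : T.depth a = T.depth b) : a = b := by
  obtain ⟨h1, h2⟩ := ha; obtain ⟨h3, h4⟩ := hb
  rw [← h2, ← h4, h]

lemma anc_parent {T : FiniteRootedTree} {u l : T.V} (h : T.Anc u l) (hne : u ≠ l) :
    T.Anc u (T.parent l) := by
  obtain ⟨h1, h2⟩ := h
  have hlt : T.depth u < T.depth l := by
    rcases lt_or_eq_of_le h1 with h | h
    · exact h
    · exact absurd (T.anc_unique ⟨h1, h2⟩ (T.anc_refl l) h) hne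
  have hlne : l ≠ T.root := by
    intro hr; rw [hr, T.depth_root] at hlt; omega
  have hd : T.depth l = T.depth (T.parent l) + 1 := T.depth_parent l hlne
  constructor
  · omega
  · rw [show T.depth (T.parent l) - T.depth u = (T.depth l - T.depth u) - 1 by omega]
    have : T.parent^[(T.depth l - T.depth u - 1) + 1] l = u := by
      rw [show (T.depth l - T.depth u - 1) + 1 = T.depth l - T.depth u by omega]; exact h2
    rw [Function.iterate_succ_apply] at this
    -- this : T.parent^[...] (T.parent l) = u
    exact this

/-- the ancestor of `l` that is a child of `v`, when `v < l` ancestor. -/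
lemma anc_step {T : FiniteRootedTree} {v l : T.V} (h : T.Anc v l)
    (hlt : T.depth v < T.depth l) :
    ∃ u, T.IsChild u v ∧ T.Anc u l := by
  obtain ⟨h1, h2⟩ := h
  set k := T.depth l - T.depth v with hk
  have hk1 : 1 ≤ k := by omega
  refine ⟨T.parent^[k-1] l, ⟨?_, ?_⟩, ?_, ?_⟩
  · intro hr
    have := T.depth_iterate l (k-1) (by omega)
    rw [hr, T.depth_root] at this
    omega
  · have : T.parent^[(k-1)+1] l = v := by
      rw [show (k-1)+1 = k by omega]; exact h2
    rw [Function.iterate_succ_apply'] at this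
    exact this
  · have := T.depth_iterate l (k-1) (by omega)
    omega
  · have hd : T.depth (T.parent^[k-1] l) = T.depth l - (k-1) :=
      T.depth_iterate l (k-1) (by omega)
    rw [hd]
    rw [show T.depth l - (T.depth l - (k-1)) = k - 1 by omega]

lemma anc_trans {T : FiniteRootedTree} {a b l : T.V} (hab : T.Anc a b) (hbl : T.Anc b l) :
    T.Anc a l := by
  obtain ⟨h1, h2⟩ := hab; obtain ⟨h3, h4⟩ := hbl
  refine ⟨le_trans h1 h3, ?_⟩
  rw [show T.depth l - T.depth a = (T.depth b - T.depth a) + (T.depth l - T.depth b) by omega]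
  rw [Function.iterate_add_apply, h4, h2]

lemma anc_child {T : FiniteRootedTree} {u v : T.V} (h : T.IsChild u v) : T.Anc v u := by
  obtain ⟨h1, h2⟩ := h
  have hd : T.depth u = T.depth v + 1 := by rw [T.depth_parent u h1, h2]
  exact ⟨by omega, by rw [hd]; simp [h2]⟩

lemma depth_child {T : FiniteRootedTree} {u v : T.V} (h : T.IsChild u v) :
    T.depth u = T.depth v + 1 := by rw [T.depth_parent u h.1, h.2]

lemma not_isLeaf_iff {T : FiniteRootedTree} {v : T.V} :
    ¬ T.IsLeaf v ↔ 1 ≤ T.numChildren v := by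
  rw [numChildren_eq_card]
  constructor
  · intro h
    rw [IsLeaf] at h
    push_neg at h
    obtain ⟨u, hu⟩ := h
    exact Finset.card_pos.2 ⟨u, mem_childrenF.2 hu⟩ 
  · intro h hl
    obtain ⟨u, hu⟩ := Finset.card_pos.1 h
    exact hl u (mem_childrenF.1 hu)

/-- probability of reaching a vertex -/
noncomputable def reachP (T : FiniteRootedTree) (x : T.V) : ℝ :=
  ∏ k ∈ Finset.range (T.depth x), (1 : ℝ) / (T.numChildren (T.parent^[k + 1] x))

lemma leafProb_eq_reachP (T : FiniteRootedTree) (l : T.V) : T.leafProb l = T.reachP l := rfl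

lemma reachP_child {T : FiniteRootedTree} {u v : T.V} (h : T.IsChild u v) :
    T.reachP u = (1 / T.numChildren v) * T.reachP v := by
  rw [reachP, reachP, depth_child h, Finset.prod_range_succ']
  have h0 : T.parent^[0+1] u = v := by simp [h.2]
  rw [h0]
  have : ∀ k ∈ Finset.range (T.depth v),
      (1:ℝ) / (T.numChildren (T.parent^[(k+1) + 1] u)) = 1 / (T.numChildren (T.parent^[k+1] v)) := by
    intro k _
    congr 2
    rw [show (k+1)+1 = (k+1)+1 from rfl, Function.iterate_add_apply, Function.iterate_one, h.2]
  rw [Finset.prod_congr rfl this, mul_comm]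

lemma reachP_pos {T : FiniteRootedTree} (x : T.V) : 0 < T.reachP x := by
  rw [reachP]
  apply Finset.prod_pos
  intro k hk
  rw [Finset.mem_range] at hk
  have hchild : T.IsChild (T.parent^[k] x) (T.parent^[k+1] x) := by
    constructor
    · intro hr
      have := T.depth_iterate x k (by omega)
      rw [hr, T.depth_root] at this
      omega
    · exact (Function.iterate_succ_apply' T.parent k x).symm
  have : 1 ≤ T.numChildren (T.parent^[k+1] x) := by
    rw [numChildren_eq_card]
    exact Finset.card_pos.2 ⟨_, mem_childrenF.2 hchild⟩
  positivity


noncomputable def maxDepth (T : FiniteRootedTree) : ℕ := Finset.univ.sup T.depth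

lemma depth_le_maxDepth (T : FiniteRootedTree) (v : T.V) : T.depth v ≤ T.maxDepth :=
  Finset.le_sup (Finset.mem_univ v)

lemma leaves_below_biUnion (T : FiniteRootedTree) (v : T.V) (hv : ¬ T.IsLeaf v) :
    T.leaves.filter (fun l => T.Anc v l)
      = (T.childrenF v).biUnion (fun u => T.leaves.filter (fun l => T.Anc u l)) := by
  ext l
  simp only [Finset.mem_biUnion, Finset.mem_filter]
  constructor
  · rintro ⟨hl, hanc⟩
    have hlv : l ≠ v := by
      rintro rfl
      rw [leaves, Finset.mem_filter] at hl
      exact hv hl.2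
    have hlt : T.depth v < T.depth l := by
      rcases lt_or_eq_of_le hanc.1 with h | h
      · exact h
      · exact absurd (T.anc_unique hanc (T.anc_refl l) h).symm hlv
    obtain ⟨u, hu, hul⟩ := T.anc_step hanc hlt
    exact ⟨u, mem_childrenF.2 hu, hl, hul⟩
  · rintro ⟨u, hu, hl, hul⟩
    exact ⟨hl, T.anc_trans (T.anc_child (mem_childrenF.1 hu)) hul⟩

lemma subtree_sum (T : FiniteRootedTree) : ∀ (n : ℕ) (v : T.V),
    T.maxDepth - T.depth v = n →
    ∑ l ∈ T.leaves.filter (fun l => T.Anc v l), T.reachP l = T.reachP v := by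
  intro n
  induction n using Nat.strong_induction_on with
  | _ n ih =>
    intro v hn
    by_cases hv : T.IsLeaf v
    · have : T.leaves.filter (fun l => T.Anc v l) = {v} := by
        ext l
        simp only [Finset.mem_filter, Finset.mem_singleton]
        constructor
        · rintro ⟨hl, hanc⟩
          rcases lt_or_eq_of_le hanc.1 with h | h
          · obtain ⟨u, hu, _⟩ := T.anc_step hanc h
            exact absurd hu (hv u)
          · exact T.anc_unique (T.anc_refl l) hanc h.symm
        · rintro rfl
          exact ⟨by simp [leaves, hv], T.anc_refl l⟩
      rw [this, Finset.sum_singleton]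
    · rw [T.leaves_below_biUnion v hv, Finset.sum_biUnion]
      · have hstep : ∀ u ∈ T.childrenF v,
            ∑ l ∈ T.leaves.filter (fun l => T.Anc u l), T.reachP l
              = (1 / T.numChildren v) * T.reachP v := by
          intro u hu
          have hc := mem_childrenF.1 hu
          have hd : T.depth u = T.depth v + 1 := T.depth_child hc
          have hlt : T.depth v < T.maxDepth := by
            have := T.depth_le_maxDepth u; omega
          have := ih (T.maxDepth - T.depth u) (by omega) u rfl
          rw [this, T.reachP_child hc]
        rw [Finset.sum_congr rfl hstep, Finset.sum_const, ← numChildren_eq_card,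
          nsmul_eq_mul]
        have hcpos : (1:ℝ) ≤ T.numChildren v := by
          have := not_isLeaf_iff.1 hv
          exact_mod_cast this
        field_simp
      · intro u hu u' hu' hne
        apply Finset.disjoint_left.2
        intro l hl hl'
        have h1 := (Finset.mem_filter.1 hl).2
        have h2 := (Finset.mem_filter.1 hl').2
        have d1 := T.depth_child (mem_childrenF.1 hu)
        have d2 := T.depth_child (mem_childrenF.1 hu')
        exact hne (T.anc_unique h1 h2 (by omega))

lemma exists_leaf_below (T : FiniteRootedTree) (v : T.V) :
    (T.leaves.filter (fun l => T.Anc v l)).Nonempty := by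
  by_contra h
  rw [Finset.not_nonempty_iff_eq_empty] at h
  have := T.subtree_sum (T.maxDepth - T.depth v) v rfl
  rw [h, Finset.sum_empty] at this
  exact absurd this.symm (ne_of_gt (T.reachP_pos v))


section Graft

variable (T : FiniteRootedTree) (v u₀ : T.V)

/-- the children of `v` other than `u₀`, which get re-parented under the new vertex. -/
def Moved (x : T.V) : Prop := T.IsChild x v ∧ x ≠ u₀

/-- vertices whose depth increases by one. -/
def Shifted (x : T.V) : Prop := ∃ u, T.IsChild u v ∧ u ≠ u₀ ∧ T.Anc u x

variable {T v u₀}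

lemma Moved.shifted {x : T.V} (h : Moved T v u₀ x) : Shifted T v u₀ x :=
  ⟨x, h.1, h.2, T.anc_refl x⟩

lemma shifted_anc {x : T.V} (h : Shifted T v u₀ x) : T.Anc v x := by
  obtain ⟨u, hu, _, hux⟩ := h
  exact T.anc_trans (T.anc_child hu) hux

lemma not_shifted_v : ¬ Shifted T v u₀ v := by
  rintro ⟨u, hu, _, hux⟩
  have := T.depth_child hu
  have := hux.1
  omega

lemma shifted_parent_iff {x : T.V} (hx : x ≠ T.root) (hm : ¬ Moved T v u₀ x) :
    Shifted T v u₀ x ↔ Shifted T v u₀ (T.parent x) := by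
  constructor
  · rintro ⟨u, hu, hne, hux⟩
    have huxne : u ≠ x := by
      rintro rfl; exact hm ⟨hu, hne⟩
    exact ⟨u, hu, hne, T.anc_parent hux huxne⟩
  · rintro ⟨u, hu, hne, hux⟩
    refine ⟨u, hu, hne, T.anc_trans hux (T.anc_child ⟨hx, rfl⟩)⟩

variable (T v u₀)

/-- The grafted tree: a new vertex (`none`) is inserted below `v`, adopting all
children of `v` except `u₀`. -/
@[reducible] noncomputable def graft : FiniteRootedTree where
  V := Option T.V
  fintypeV := inferInstance
  root := some T.root
  parent x := match x with
    | none => some v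
    | some x => if Moved T v u₀ x then none else some (T.parent x)
  depth x := match x with
    | none => T.depth v + 1
    | some x => if Shifted T v u₀ x then T.depth x + 1 else T.depth x
  depth_root := by simp
    [show ¬ Shifted T v u₀ T.root by
      rintro ⟨u, hu, _, hur⟩
      have := T.depth_child hu
      have := hur.1
      have := T.depth_root
      omega, T.depth_root]
  depth_parent := by
    rintro (_ | x) hne
    · simp only
      rw [if_neg (not_shifted_v (u₀ := u₀))]
    · have hxr : x ≠ T.root := fun h => hne (by rw [h])
      by_cases hm : Moved T v u₀ x
      · simp only [if_pos hm, if_pos hm.shifted]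
        have := T.depth_child hm.1
        omega
      · simp only [if_neg hm]
        have hdp := T.depth_parent x hxr
        by_cases hs : Shifted T v u₀ x
        · rw [if_pos hs, if_pos ((shifted_parent_iff hxr hm).1 hs)]
          omega
        · rw [if_neg hs, if_neg (fun h => hs ((shifted_parent_iff hxr hm).2 h))]
          omega
  root_of_depth_zero := by
    rintro (_ | x) h
    · simp at h
    · simp only at h
      by_cases hs : Shifted T v u₀ x
      · rw [if_pos hs] at h; omega
      · rw [if_neg hs] at h
        rw [T.root_of_depth_zero x h]

variable {T v u₀}

lemma graft_root : (graft T v u₀).root = some T.root := rfl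

lemma graft_isChild_some_some {x y : T.V} :
    (graft T v u₀).IsChild (some x) (some y) ↔ T.IsChild x y ∧ ¬ Moved T v u₀ x := by
  constructor
  · rintro ⟨h1, h2⟩
    simp only [graft] at h2
    by_cases hm : Moved T v u₀ x
    · rw [if_pos hm] at h2; exact absurd h2 (by simp)
    · rw [if_neg hm] at h2
      exact ⟨⟨fun h => h1 (by rw [graft_root]; exact congrArg some h), Option.some_injective _ h2⟩, hm⟩
  · rintro ⟨⟨h1, h2⟩, hm⟩
    refine ⟨fun h => h1 (Option.some_injective _ (by rw [← graft_root]; exact h)), ?_⟩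
    simp only [graft, if_neg hm, h2]

lemma graft_isChild_none_some {y : T.V} :
    (graft T v u₀).IsChild none (some y) ↔ y = v := by
  constructor
  · rintro ⟨_, h2⟩
    simp only [graft] at h2
    exact (Option.some_injective _ h2).symm
  · rintro rfl
    exact ⟨by rw [graft_root]; simp, rfl⟩

lemma graft_isChild_some_none {x : T.V} :
    (graft T v u₀).IsChild (some x) none ↔ Moved T v u₀ x := by
  constructor
  · rintro ⟨h1, h2⟩
    simp only [graft] at h2
    by_cases hm : Moved T v u₀ x
    · exact hm
    · rw [if_neg hm] at h2; exact absurd h2 (by simp)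
  · intro hm
    refine ⟨?_, by simp only [graft, if_pos hm]⟩
    intro h
    rw [graft_root] at h
    exact hm.1.1 (Option.some_injective _ h)

lemma graft_not_isChild_none_none : ¬ (graft T v u₀).IsChild none none := by
  rintro ⟨_, h2⟩
  exact absurd h2 (by simp [graft])


lemma graft_numChildren_some_ne {y : T.V} (hy : y ≠ v) :
    (graft T v u₀).numChildren (some y) = T.numChildren y := by
  rw [numChildren, numChildren]
  have : {u : (graft T v u₀).V | (graft T v u₀).IsChild u (some y)}
      = some '' {u : T.V | T.IsChild u y} := by
    ext (_ | x)
    · simp only [Set.mem_setOf_eq, Set.mem_image]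
      constructor
      · intro h; exact absurd (graft_isChild_none_some.1 h) hy
      · rintro ⟨a, _, h⟩; exact absurd h (by simp)
    · simp only [Set.mem_setOf_eq, Set.mem_image, graft_isChild_some_some]
      constructor
      · rintro ⟨h, _⟩; exact ⟨x, h, rfl⟩
      · rintro ⟨a, ha, h⟩
        have : a = x := Option.some_injective _ h
        subst this
        refine ⟨ha, fun hm => hy ?_⟩
        rw [← hm.1.2, ha.2]
    
  rw [this, Set.ncard_image_of_injective _ (Option.some_injective _)]

lemma graft_numChildren_some_v (hu₀ : T.IsChild u₀ v) :
    (graft T v u₀).numChildren (some v) = 2 := by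
  rw [numChildren]
  have : {u : (graft T v u₀).V | (graft T v u₀).IsChild u (some v)} = {some u₀, none} := by
    ext (_ | x)
    · simp only [Set.mem_setOf_eq, Set.mem_insert_iff, Set.mem_singleton_iff]
      simp [graft_isChild_none_some]
    · simp only [Set.mem_setOf_eq, Set.mem_insert_iff, Set.mem_singleton_iff,
        graft_isChild_some_some]
      constructor
      · rintro ⟨h, hm⟩
        left
        by_contra hne
        exact hm ⟨h, fun he => hne (congrArg some he)⟩
      · rintro (h | h)
        · have : x = u₀ := Option.some_injective _ h
          subst this
          exact ⟨hu₀, fun hm => hm.2 rfl⟩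
        · exact absurd h (by simp)
  rw [this, Set.ncard_pair (by simp)]

lemma graft_numChildren_none :
    (graft T v u₀).numChildren none = ({u : T.V | T.IsChild u v} \ {u₀}).ncard := by
  rw [numChildren]
  have : {u : (graft T v u₀).V | (graft T v u₀).IsChild u none}
      = some '' ({u : T.V | T.IsChild u v} \ {u₀}) := by
    ext (_ | x)
    · simp [graft_not_isChild_none_none]
    · simp only [Set.mem_setOf_eq, Set.mem_image, graft_isChild_some_none]
      constructor
      · rintro ⟨h1, h2⟩; exact ⟨x, ⟨h1, h2⟩, rfl⟩
      · rintro ⟨a, ⟨h1, h2⟩, h⟩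
        have : a = x := Option.some_injective _ h
        subst this
        exact ⟨h1, h2⟩
  rw [this, Set.ncard_image_of_injective _ (Option.some_injective _)]

lemma graft_numChildren_none' (hu₀ : T.IsChild u₀ v) :
    (graft T v u₀).numChildren none = T.numChildren v - 1 := by
  rw [graft_numChildren_none, numChildren]
  exact Set.ncard_diff_singleton_of_mem (s := {u : T.V | T.IsChild u v}) hu₀

lemma graft_isLeaf_some_iff (hu₀ : T.IsChild u₀ v) {x : T.V} :
    (graft T v u₀).IsLeaf (some x) ↔ T.IsLeaf x := by
  constructor
  · intro h u hu
    by_cases hx : x = v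
    · subst hx
      exact h none (graft_isChild_none_some.2 rfl)
    · refine h (some u) (graft_isChild_some_some.2 ⟨hu, fun hm => hx ?_⟩)
      rw [← hm.1.2, hu.2]
  · rintro h (_ | u) hu
    · have : x = v := graft_isChild_none_some.1 hu
      subst this
      exact h u₀ hu₀
    · exact h u (graft_isChild_some_some.1 hu).1

lemma graft_not_isLeaf_none {u₁ : T.V} (hu₁ : T.IsChild u₁ v) (hne : u₁ ≠ u₀) :
    ¬ (graft T v u₀).IsLeaf none := by
  intro h
  exact h (some u₁) (graft_isChild_some_none.2 ⟨hu₁, hne⟩)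

lemma graft_leaves (hu₀ : T.IsChild u₀ v) {u₁ : T.V} (hu₁ : T.IsChild u₁ v) (hne : u₁ ≠ u₀) :
    (graft T v u₀).leaves = T.leaves.map ⟨some, Option.some_injective _⟩ := by
  ext (_ | x)
  · simp only [leaves, Finset.mem_filter, Finset.mem_univ, true_and, Finset.mem_map,
      Function.Embedding.coeFn_mk]
    constructor
    · intro h; exact absurd h (graft_not_isLeaf_none hu₁ hne)
    · rintro ⟨a, _, h⟩; exact absurd h (by simp)
  · simp only [leaves, Finset.mem_filter, Finset.mem_univ, true_and, Finset.mem_map,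
      Function.Embedding.coeFn_mk]
    rw [graft_isLeaf_some_iff hu₀]
    constructor
    · intro h; exact ⟨x, h, rfl⟩
    · rintro ⟨a, ha, h⟩
      rwa [← Option.some_injective _ h]


lemma graft_parent_not_moved {x : T.V} (hm : ¬ Moved T v u₀ x) :
    (graft T v u₀).parent (some x) = some (T.parent x) := by
  simp only [graft, if_neg hm]

lemma graft_parent_moved {x : T.V} (hm : Moved T v u₀ x) :
    (graft T v u₀).parent (some x) = none := by
  simp only [graft, if_pos hm]

lemma graft_parent_none : (graft T v u₀).parent none = some v := rfl

lemma graft_depth_some {x : T.V} :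
    (graft T v u₀).depth (some x)
      = if Shifted T v u₀ x then T.depth x + 1 else T.depth x := rfl

lemma graft_depth_none : (graft T v u₀).depth none = T.depth v + 1 := rfl

lemma anc_iterate (T : FiniteRootedTree) {x : T.V} {i : ℕ} (hi : i ≤ T.depth x) :
    T.Anc (T.parent^[i] x) x := by
  have hd := T.depth_iterate x i hi
  exact ⟨by omega, by rw [hd, show T.depth x - (T.depth x - i) = i by omega]⟩

lemma graft_iterate_of_not_moved {x : T.V} {j : ℕ}
    (h : ∀ i, i < j → ¬ Moved T v u₀ (T.parent^[i] x)) :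
    (graft T v u₀).parent^[j] (some x) = some (T.parent^[j] x) := by
  induction j with
  | zero => rfl
  | succ n ihn =>
    rw [Function.iterate_succ_apply', Function.iterate_succ_apply',
      ihn (fun i hi => h i (by omega)), graft_parent_not_moved (h n (by omega))]

/-- Class (a): leaves not below `v` keep the same depth and probability. -/
lemma graft_class_a {l : T.V} (h : ¬ T.Anc v l) :
    (graft T v u₀).depth (some l) = T.depth l ∧
    (graft T v u₀).reachP (some l) = T.reachP l := by
  have hnv : ∀ i, i ≤ T.depth l → T.parent^[i] l ≠ v := by
    intro i hi he
    exact h (he ▸ T.anc_iterate hi)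
  have hnm : ∀ i, i < T.depth l → ¬ Moved T v u₀ (T.parent^[i] l) := by
    intro i hi hm
    exact h (T.anc_trans (T.anc_child hm.1) (T.anc_iterate (by omega)))
  have hns : ¬ Shifted T v u₀ l := fun hs => h (shifted_anc hs)
  have hdep : (graft T v u₀).depth (some l) = T.depth l := by
    rw [graft_depth_some, if_neg hns]
  refine ⟨hdep, ?_⟩
  rw [reachP, reachP, hdep]
  apply Finset.prod_congr rfl
  intro k hk
  rw [Finset.mem_range] at hk
  rw [graft_iterate_of_not_moved (fun i hi => hnm i (by omega)),
    graft_numChildren_some_ne (hnv (k+1) (by omega))]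


/-- Class (b): leaves below `u₀` keep their depth; probability is multiplied by `c/2`. -/
lemma graft_class_b (hu₀ : T.IsChild u₀ v) (hc : 3 ≤ T.numChildren v) {x : T.V}
    (h : T.Anc u₀ x) :
    (graft T v u₀).depth (some x) = T.depth x ∧
    (graft T v u₀).reachP (some x)
      = ((T.numChildren v : ℝ) / 2) * T.reachP x := by
  have hdu : T.depth u₀ = T.depth v + 1 := T.depth_child hu₀
  set d := T.depth x with hd
  set dv := T.depth v with hdv
  have hdle : dv + 1 ≤ d := by
    have := h.1; omega
  set kv := d - dv - 1 with hkv
  have hvx : T.Anc v x := T.anc_trans (T.anc_child hu₀) h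
  have hpv : T.parent^[kv + 1] x = v := by
    have := hvx.2
    rwa [show d - dv = kv + 1 by omega] at this
  have hpu : T.parent^[kv] x = u₀ := by
    have := h.2
    rwa [show d - T.depth u₀ = kv by omega] at this
  have hne : ∀ k, k ≤ d → k ≠ kv + 1 → T.parent^[k] x ≠ v := by
    intro k hk hkne he
    have := T.depth_iterate x k hk
    rw [he] at this
    omega
  have hnm : ∀ i, i < d → ¬ Moved T v u₀ (T.parent^[i] x) := by
    intro i hi hm
    have hdm := T.depth_child hm.1
    have hdi := T.depth_iterate x i (by omega)
    have : i = kv := by omega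
    exact hm.2 (by rw [this]; exact hpu)
  have hns : ¬ Shifted T v u₀ x := by
    rintro ⟨u, hu, hune, hux⟩
    have hdu' : T.depth u = dv + 1 := T.depth_child hu
    have : u = u₀ := by
      have := hux.2
      rw [show d - T.depth u = kv by omega] at this
      rw [← this, hpu]
    exact hune this
  have hdep : (graft T v u₀).depth (some x) = d := by
    rw [graft_depth_some, if_neg hns]
  refine ⟨hdep, ?_⟩
  have hiter : ∀ j, j ≤ d →
      (graft T v u₀).parent^[j] (some x) = some (T.parent^[j] x) := by
    intro j hj
    exact graft_iterate_of_not_moved (fun i hi => hnm i (by omega))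
  rw [reachP, reachP, hdep]
  have hmem : kv ∈ Finset.range d := Finset.mem_range.2 (by omega)
  rw [← Finset.mul_prod_erase _ _ hmem, ← Finset.mul_prod_erase _ _ hmem]
  have herase : ∀ k ∈ (Finset.range d).erase kv,
      (1:ℝ) / ((graft T v u₀).numChildren ((graft T v u₀).parent^[k+1] (some x)))
        = 1 / (T.numChildren (T.parent^[k+1] x)) := by
    intro k hk
    obtain ⟨hkne, hkr⟩ := Finset.mem_erase.1 hk
    rw [Finset.mem_range] at hkr
    rw [hiter (k+1) (by omega),
      graft_numChildren_some_ne (hne (k+1) (by omega) (by omega))]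
  rw [Finset.prod_congr rfl herase]
  rw [hiter (kv+1) (by omega), hpv, graft_numChildren_some_v hu₀]
  have hc0 : (T.numChildren v : ℝ) ≠ 0 := by positivity
  generalize (∏ k ∈ (Finset.range d).erase kv,
    (1:ℝ)/(T.numChildren (T.parent^[k+1] x))) = P
  field_simp
  ring


/-- Class (c): leaves below the moved children gain one depth;
probability is multiplied by `c/(2(c-1))`. -/
lemma graft_class_c (hu₀ : T.IsChild u₀ v) (hc : 3 ≤ T.numChildren v) {x : T.V}
    (h : Shifted T v u₀ x) :
    (graft T v u₀).depth (some x) = T.depth x + 1 ∧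
    (graft T v u₀).reachP (some x)
      = ((T.numChildren v : ℝ) / (2 * ((T.numChildren v : ℝ) - 1))) * T.reachP x := by
  obtain ⟨u, hu, hune, hux⟩ := h
  have hdu : T.depth u = T.depth v + 1 := T.depth_child hu
  set d := T.depth x with hd
  set dv := T.depth v with hdv
  have hdle : dv + 1 ≤ d := by have := hux.1; omega
  set j₀ := d - dv - 1 with hj₀
  have hpu : T.parent^[j₀] x = u := by
    have := hux.2
    rwa [show d - T.depth u = j₀ by omega] at this
  have hvx : T.Anc v x := T.anc_trans (T.anc_child hu) hux
  have hpv : T.parent^[j₀ + 1] x = v := by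
    have := hvx.2
    rwa [show d - dv = j₀ + 1 by omega] at this
  have hmu : Moved T v u₀ u := ⟨hu, hune⟩
  have hnm_before : ∀ i, i < j₀ → ¬ Moved T v u₀ (T.parent^[i] x) := by
    intro i hi hm
    have := T.depth_child hm.1
    have := T.depth_iterate x i (by omega)
    omega
  have hnm_after : ∀ i, j₀ + 1 ≤ i → i ≤ d → ¬ Moved T v u₀ (T.parent^[i] x) := by
    intro i h1 h2 hm
    have := T.depth_child hm.1
    have := T.depth_iterate x i h2
    omega
  have hiter1 : ∀ j, j ≤ j₀ →
      (graft T v u₀).parent^[j] (some x) = some (T.parent^[j] x) :=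
    fun j hj => graft_iterate_of_not_moved (fun i hi => hnm_before i (by omega))
  have hiter2 : (graft T v u₀).parent^[j₀ + 1] (some x) = none := by
    rw [Function.iterate_succ_apply', hiter1 j₀ le_rfl, hpu, graft_parent_moved hmu]
  have hiter3 : ∀ i, i ≤ dv →
      (graft T v u₀).parent^[j₀ + 2 + i] (some x) = some (T.parent^[j₀ + 1 + i] x) := by
    intro i
    induction i with
    | zero =>
      intro _
      rw [show j₀ + 2 + 0 = (j₀ + 1) + 1 by omega, Function.iterate_succ_apply', hiter2,
        graft_parent_none, show j₀ + 1 + 0 = j₀ + 1 by omega, hpv]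
    | succ n ihn =>
      intro hn
      rw [show j₀ + 2 + (n+1) = (j₀ + 2 + n) + 1 by omega, Function.iterate_succ_apply',
        ihn (by omega), graft_parent_not_moved (hnm_after (j₀ + 1 + n) (by omega) (by omega)),
        show j₀ + 1 + (n+1) = (j₀ + 1 + n) + 1 by omega, Function.iterate_succ_apply']
  have hshift : Shifted T v u₀ x := ⟨u, hu, hune, hux⟩
  have hdep : (graft T v u₀).depth (some x) = d + 1 := by
    rw [graft_depth_some, if_pos hshift]
  refine ⟨hdep, ?_⟩
  have eL : (graft T v u₀).reachP (some x)
      = (∏ k ∈ Finset.range j₀,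
          (1:ℝ) / ((graft T v u₀).numChildren ((graft T v u₀).parent^[k + 1] (some x)))) *
        (((∏ i ∈ Finset.range dv,
          (1:ℝ) / ((graft T v u₀).numChildren
            ((graft T v u₀).parent^[j₀ + (i + 1 + 1) + 1] (some x)))) *
          ((1:ℝ) / ((graft T v u₀).numChildren
            ((graft T v u₀).parent^[j₀ + (0 + 1) + 1] (some x))))) *
          ((1:ℝ) / ((graft T v u₀).numChildren
            ((graft T v u₀).parent^[j₀ + 0 + 1] (some x))))) := by
    rw [reachP, hdep, show d + 1 = j₀ + (dv + 2) by omega, Finset.prod_range_add]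
    congr 1
    rw [Finset.prod_range_succ', Finset.prod_range_succ']
  have eR : T.reachP x
      = (∏ k ∈ Finset.range j₀, (1:ℝ) / (T.numChildren (T.parent^[k + 1] x))) *
        ((∏ i ∈ Finset.range dv,
          (1:ℝ) / (T.numChildren (T.parent^[j₀ + (i + 1) + 1] x))) *
          ((1:ℝ) / (T.numChildren (T.parent^[j₀ + 0 + 1] x)))) := by
    rw [reachP, show T.depth x = j₀ + (dv + 1) by omega, Finset.prod_range_add]
    congr 1
    rw [Finset.prod_range_succ']
  rw [eL, eR]
  -- first chunks agree
  have hfirst : ∀ k ∈ Finset.range j₀,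
      (1:ℝ) / ((graft T v u₀).numChildren ((graft T v u₀).parent^[k+1] (some x)))
        = 1 / (T.numChildren (T.parent^[k+1] x)) := by
    intro k hk
    rw [Finset.mem_range] at hk
    have hne : T.parent^[k+1] x ≠ v := by
      intro he
      have := T.depth_iterate x (k+1) (by omega)
      rw [he] at this
      omega
    rw [hiter1 (k+1) (by omega), graft_numChildren_some_ne hne]
  rw [Finset.prod_congr rfl hfirst]
  -- middle chunks agree
  have hmid : ∀ i ∈ Finset.range dv,
      (1:ℝ) / ((graft T v u₀).numChildren
        ((graft T v u₀).parent^[j₀ + (i + 1 + 1) + 1] (some x)))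
        = 1 / (T.numChildren (T.parent^[j₀ + (i + 1) + 1] x)) := by
    intro i hi
    rw [Finset.mem_range] at hi
    have h3 : (graft T v u₀).parent^[j₀ + (i + 1 + 1) + 1] (some x)
        = some (T.parent^[j₀ + 1 + (i + 1)] x) := by
      rw [show j₀ + (i + 1 + 1) + 1 = j₀ + 2 + (i + 1) by omega]
      exact hiter3 (i+1) (by omega)
    have hne : T.parent^[j₀ + 1 + (i + 1)] x ≠ v := by
      intro he
      have := T.depth_iterate x (j₀ + 1 + (i + 1)) (by omega)
      rw [he] at this
      omega
    rw [h3, graft_numChildren_some_ne hne,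
      show j₀ + 1 + (i + 1) = j₀ + (i + 1) + 1 by omega]
  rw [Finset.prod_congr rfl hmid]
  -- the special factors
  have hg0 : (graft T v u₀).parent^[j₀ + 0 + 1] (some x) = none := by
    rw [show j₀ + 0 + 1 = j₀ + 1 by omega]; exact hiter2
  have hg1 : (graft T v u₀).parent^[j₀ + (0 + 1) + 1] (some x) = some v := by
    have := hiter3 0 (by omega)
    rw [show j₀ + (0 + 1) + 1 = j₀ + 2 + 0 by omega, this,
      show j₀ + 1 + 0 = j₀ + 1 by omega, hpv]
  have hf0 : T.parent^[j₀ + 0 + 1] x = v := by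
    rw [show j₀ + 0 + 1 = j₀ + 1 by omega]; exact hpv
  rw [hg0, hg1, hf0, graft_numChildren_none' hu₀, graft_numChildren_some_v hu₀]
  have hc1 : (1:ℝ) ≤ (T.numChildren v : ℝ) := by exact_mod_cast Nat.one_le_of_lt hc
  have hcsub : ((T.numChildren v - 1 : ℕ) : ℝ) = (T.numChildren v : ℝ) - 1 := by
    have h1 : 1 ≤ T.numChildren v := by omega
    push_cast [h1]
    ring
  rw [hcsub]
  have hc0 : (T.numChildren v : ℝ) ≠ 0 := by positivity
  have hcm1 : (T.numChildren v : ℝ) - 1 ≠ 0 := by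
    have h3 : (3:ℝ) ≤ (T.numChildren v : ℝ) := by exact_mod_cast hc
    intro h0
    nlinarith
  generalize (∏ k ∈ Finset.range j₀, (1:ℝ)/(T.numChildren (T.parent^[k+1] x))) = A
  generalize (∏ i ∈ Finset.range dv, (1:ℝ)/(T.numChildren (T.parent^[j₀ + (i+1) + 1] x))) = Q
  field_simp
  ring


lemma sum_leaf_classes (hu₀ : T.IsChild u₀ v) (F : T.V → ℝ) :
    ∑ l ∈ T.leaves, F l
      = (∑ l ∈ T.leaves.filter (fun l => ¬ T.Anc v l), F l)
      + ((∑ l ∈ T.leaves.filter (fun l => T.Anc u₀ l), F l)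
      + (∑ l ∈ T.leaves.filter (fun l => Shifted T v u₀ l), F l)) := by
  rw [← Finset.sum_filter_add_sum_filter_not T.leaves (fun l => T.Anc v l) F]
  rw [add_comm (∑ l ∈ T.leaves.filter (fun l => T.Anc v l), F l)]
  congr 1
  have h1 : T.leaves.filter (fun l => T.Anc v l)
      = (T.leaves.filter (fun l => T.Anc u₀ l))
        ∪ (T.leaves.filter (fun l => Shifted T v u₀ l)) := by
    ext l
    simp only [Finset.mem_filter, Finset.mem_union]
    constructor
    · rintro ⟨hl, hanc⟩
      have hlv : l ≠ v := by
        rintro rfl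
        rw [leaves, Finset.mem_filter] at hl
        exact hl.2 u₀ hu₀
      have hlt : T.depth v < T.depth l := by
        rcases lt_or_eq_of_le hanc.1 with hh | hh
        · exact hh
        · exact absurd (T.anc_unique (T.anc_refl l) hanc hh.symm) hlv
      obtain ⟨u, hu, hul⟩ := T.anc_step hanc hlt
      by_cases he : u = u₀
      · exact Or.inl ⟨hl, he ▸ hul⟩
      · exact Or.inr ⟨hl, u, hu, he, hul⟩
    · rintro (⟨hl, h⟩ | ⟨hl, h⟩)
      · exact ⟨hl, T.anc_trans (T.anc_child hu₀) h⟩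
      · exact ⟨hl, shifted_anc h⟩
  rw [h1, Finset.sum_union]
  rw [Finset.disjoint_left]
  rintro l hl hl'
  obtain ⟨-, hb⟩ := Finset.mem_filter.1 hl
  obtain ⟨-, u, hu, hune, hul⟩ := Finset.mem_filter.1 hl'
  have d1 := T.depth_child hu₀
  have d2 := T.depth_child hu
  exact hune (T.anc_unique hul hb (by omega))

lemma sum_shifted_biUnion (F : T.V → ℝ) :
    ∑ l ∈ T.leaves.filter (fun l => Shifted T v u₀ l), F l
      = ∑ u ∈ (T.childrenF v).erase u₀, ∑ l ∈ T.leaves.filter (fun l => T.Anc u l), F l := by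
  have h1 : T.leaves.filter (fun l => Shifted T v u₀ l)
      = ((T.childrenF v).erase u₀).biUnion
          (fun u => T.leaves.filter (fun l => T.Anc u l)) := by
    ext l
    simp only [Finset.mem_filter, Finset.mem_biUnion, Finset.mem_erase, mem_childrenF]
    constructor
    · rintro ⟨hl, u, hu, hune, hul⟩
      exact ⟨u, ⟨hune, hu⟩, hl, hul⟩
    · rintro ⟨u, ⟨hune, hu⟩, hl, hul⟩
      exact ⟨hl, u, hu, hune, hul⟩
  rw [h1, Finset.sum_biUnion]
  intro a ha b hb hne
  apply Finset.disjoint_left.2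
  intro l hl hl'
  have h1 := (Finset.mem_filter.1 hl).2
  have h2 := (Finset.mem_filter.1 hl').2
  have d1 := T.depth_child (mem_childrenF.1 (Finset.mem_of_mem_erase ha))
  have d2 := T.depth_child (mem_childrenF.1 (Finset.mem_of_mem_erase hb))
  exact hne (T.anc_unique h1 h2 (by omega))


lemma final_alg (c Bu S P X : ℝ) (hc : 3 ≤ c) (hS : S ≤ (c-1)*Bu) (hP : 0 < P) :
    X + (Bu + S) < X + ((c/2)*Bu + (c/(2*(c-1))) * (S + (c-1)*((1/c)*P))) := by
  have hc1 : (0:ℝ) < c - 1 := by linarith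
  have hc0 : (0:ℝ) < c := by linarith
  have e : (c/(2*(c-1))) * (S + (c-1)*((1/c)*P)) = (c/(2*(c-1)))*S + P/2 := by
    field_simp
  rw [e]
  have key : S * ((c-2)/(2*(c-1))) ≤ ((c-1)*Bu) * ((c-2)/(2*(c-1))) :=
    mul_le_mul_of_nonneg_right hS (div_nonneg (by linarith) (by linarith))
  have e2 : ((c-1)*Bu) * ((c-2)/(2*(c-1))) = (c-2)/2 * Bu := by field_simp
  have e3 : S * ((c-2)/(2*(c-1))) = S - (c/(2*(c-1)))*S := by field_simp; ring
  rw [e2, e3] at key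
  linarith

end Graft

theorem main_surgery (T : FiniteRootedTree) (v : T.V) (hc : 3 ≤ T.numChildren v)
    (hone : ∀ w : T.V, T.numChildren w ≠ 1) :
    ∃ T' : FiniteRootedTree, (∀ w : T'.V, T'.numChildren w ≠ 1) ∧
      T'.leaves.card = T.leaves.card ∧ T.g < T'.g := by
  classical
  -- choose the child maximizing B
  have hcard : (T.childrenF v).Nonempty := by
    rw [← Finset.card_pos, ← numChildren_eq_card]; omega
  obtain ⟨u₀, hu₀mem, hmax⟩ := Finset.exists_max_image (T.childrenF v)
    (fun u => ∑ l ∈ T.leaves.filter (fun l => T.Anc u l), (T.depth l : ℝ) * T.reachP l) hcard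
  have hu₀ : T.IsChild u₀ v := mem_childrenF.1 hu₀mem
  obtain ⟨u₁, hu₁mem, hu₁ne⟩ := Finset.exists_mem_ne
    (s := T.childrenF v) (by rw [← numChildren_eq_card]; omega) u₀
  have hu₁ : T.IsChild u₁ v := mem_childrenF.1 hu₁mem
  refine ⟨graft T v u₀, ?_, ?_, ?_⟩
  · rintro (_ | y)
    · rw [graft_numChildren_none' hu₀]; omega
    · by_cases hy : y = v
      · subst hy; rw [graft_numChildren_some_v hu₀]; omega
      · rw [graft_numChildren_some_ne hy]; exact hone y
  · rw [graft_leaves hu₀ hu₁ hu₁ne, Finset.card_map]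
  · have hgT : T.g = (∑ l ∈ T.leaves.filter (fun l => ¬ T.Anc v l), (T.depth l : ℝ) * T.reachP l)
        + ((∑ l ∈ T.leaves.filter (fun l => T.Anc u₀ l), (T.depth l : ℝ) * T.reachP l)
        + (∑ l ∈ T.leaves.filter (fun l => Shifted T v u₀ l), (T.depth l : ℝ) * T.reachP l)) :=
      sum_leaf_classes hu₀ _
    have hgG : (graft T v u₀).g
        = (∑ l ∈ T.leaves.filter (fun l => ¬ T.Anc v l), (T.depth l : ℝ) * T.reachP l)
        + ((((T.numChildren v : ℝ))/2) * (∑ l ∈ T.leaves.filter (fun l => T.Anc u₀ l),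
            (T.depth l : ℝ) * T.reachP l)
        + (((T.numChildren v : ℝ))/(2*(((T.numChildren v : ℝ))-1)) *
            ((∑ l ∈ T.leaves.filter (fun l => Shifted T v u₀ l), (T.depth l : ℝ) * T.reachP l)
            + (∑ l ∈ T.leaves.filter (fun l => Shifted T v u₀ l), T.reachP l)))) := by
      have h0 : (graft T v u₀).g = ∑ l ∈ T.leaves,
          (((graft T v u₀).depth (some l) : ℝ) * (graft T v u₀).reachP (some l)) := by
        rw [g, graft_leaves hu₀ hu₁ hu₁ne, Finset.sum_map]
        rfl
      rw [h0, sum_leaf_classes hu₀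
        (fun l => ((graft T v u₀).depth (some l) : ℝ) * (graft T v u₀).reachP (some l))]
      congr 1
      · apply Finset.sum_congr rfl
        intro l hl
        obtain ⟨hd, hp⟩ := graft_class_a (T := T) (u₀ := u₀) (Finset.mem_filter.1 hl).2
        rw [hd, hp]
      congr 1
      · rw [Finset.mul_sum]
        apply Finset.sum_congr rfl
        intro l hl
        obtain ⟨hd, hp⟩ := graft_class_b hu₀ hc (Finset.mem_filter.1 hl).2
        rw [hd, hp]
        ring
      · rw [mul_add, Finset.mul_sum, Finset.mul_sum, ← Finset.sum_add_distrib]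
        apply Finset.sum_congr rfl
        intro l hl
        obtain ⟨hd, hp⟩ := graft_class_c hu₀ hc (Finset.mem_filter.1 hl).2
        rw [hd, hp]
        push_cast
        ring
    have hPsum : (∑ l ∈ T.leaves.filter (fun l => Shifted T v u₀ l), T.reachP l)
        = ((T.numChildren v : ℝ) - 1) * ((1/(T.numChildren v:ℝ)) * T.reachP v) := by
      rw [sum_shifted_biUnion T.reachP]
      have hstep : ∀ u ∈ (T.childrenF v).erase u₀,
          (∑ l ∈ T.leaves.filter (fun l => T.Anc u l), T.reachP l)
            = (1/(T.numChildren v:ℝ)) * T.reachP v := by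
        intro u hu
        rw [T.subtree_sum (T.maxDepth - T.depth u) u rfl,
          reachP_child (mem_childrenF.1 (Finset.mem_of_mem_erase hu))]
      rw [Finset.sum_congr rfl hstep, Finset.sum_const,
        Finset.card_erase_of_mem hu₀mem, ← numChildren_eq_card, nsmul_eq_mul]
      congr 1
      have h1 : 1 ≤ T.numChildren v := by omega
      push_cast [h1]
      ring
    have hS : (∑ l ∈ T.leaves.filter (fun l => Shifted T v u₀ l), (T.depth l:ℝ) * T.reachP l)
        ≤ ((T.numChildren v:ℝ) - 1) * (∑ l ∈ T.leaves.filter (fun l => T.Anc u₀ l),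
            (T.depth l:ℝ) * T.reachP l) := by
      rw [sum_shifted_biUnion (fun l => (T.depth l:ℝ) * T.reachP l)]
      calc ∑ u ∈ (T.childrenF v).erase u₀, ∑ l ∈ T.leaves.filter (fun l => T.Anc u l),
            (T.depth l:ℝ) * T.reachP l
          ≤ ∑ _u ∈ (T.childrenF v).erase u₀, ∑ l ∈ T.leaves.filter (fun l => T.Anc u₀ l),
            (T.depth l:ℝ) * T.reachP l :=
            Finset.sum_le_sum (fun u hu => hmax u (Finset.mem_of_mem_erase hu))
        _ = ((T.numChildren v:ℝ) - 1) * (∑ l ∈ T.leaves.filter (fun l => T.Anc u₀ l),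
            (T.depth l:ℝ) * T.reachP l) := by
            rw [Finset.sum_const, Finset.card_erase_of_mem hu₀mem, ← numChildren_eq_card,
              nsmul_eq_mul]
            congr 1
            have h1 : 1 ≤ T.numChildren v := by omega
            push_cast [h1]
            ring
    have hc3 : (3:ℝ) ≤ (T.numChildren v : ℝ) := by exact_mod_cast hc
    rw [hgT, hgG, hPsum]
    exact final_alg _ _ _ _ _ hc3 hS (T.reachP_pos v)

end FiniteRootedTree

/-- The truncations of `T₁` and `T₂` at level `h` (the rooted trees induced on
the vertices of depth at most `h`) are isomorphic as rooted trees. -/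
def TruncIso (T₁ T₂ : FiniteRootedTree) (h : ℕ) : Prop :=
  ∃ φ : {v : T₁.V // T₁.depth v ≤ h} ≃ {v : T₂.V // T₂.depth v ≤ h},
    (φ ⟨T₁.root, by simp [T₁.depth_root]⟩).val = T₂.root ∧
    ∀ u u' : {v : T₁.V // T₁.depth v ≤ h},
      T₁.IsChild u'.val u.val ↔ T₂.IsChild (φ u').val (φ u).val

/-- `InjM h U` is the set of root-respecting injective homomorphisms from the
rooted tree `U` into the complete binary tree `M_h`, whose vertices are the
boolean lists of length at most `h`, rooted at the empty list, with the
children of a list being its two one-element extensions. -/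
def InjM (h : ℕ) (U : FiniteRootedTree) : Set (U.V → List Bool) :=
  {α | Function.Injective α ∧ (∀ u, (α u).length ≤ h) ∧ α U.root = [] ∧
    ∀ u u' : U.V, U.IsChild u' u → ∃ b : Bool, α u' = α u ++ [b]}

/-- if no vertex has exactly one child and some vertex has at least
three children, then some tree with the same number of leaves (and no unary
vertex) has strictly larger expected walk length. -/
theorem stmt_10 (T : FiniteRootedTree) (hone : ∀ v : T.V, T.numChildren v ≠ 1)
    (hbig : ∃ v : T.V, 3 ≤ T.numChildren v) :
    ∃ T' : FiniteRootedTree, (∀ v : T'.V, T'.numChildren v ≠ 1) ∧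
      T'.leaves.card = T.leaves.card ∧ T.g < T'.g := by
  obtain ⟨v, hv⟩ := hbig
  exact FiniteRootedTree.main_surgery T v hv hone
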